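/- The function d is a metric on V — d(x,y) = 0 if and only if x = y, d(x,y) = d(y,x) for all x, y, and d(x,z) ≤ d(x,y) + d(y,z) for all x, y, z — and moreover d(x,y) = d̂(x,y) whenever x and y are related. (Abstract form of Theorem 5.5, parts (1) and the metric axioms, of the paper.) -/

import Mathlib

/-- `x` and `y` are related: equal, `E 0`-equivalent, or joined by an elementary move. -/
def Related {V : Type*} (E : ℕ → V → V → Prop) (A : V → V → Prop) (x y : V) : Prop :=
  x = y ∨ E 0 x y ∨ A x y

open Classical in
/-- The partial distance `d̂` (given a total value on unrelated pairs, which is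
never used): `d̂(x,y) = 0` if `x = y`; if `x ≠ y` and `E 0 x y`, then
`d̂(x,y) = 1/n` where `n` is the least (equivalently, for a separating refining
family, the unique) integer with `¬ E n x y` — so `E (n-1) x y` and `¬ E n x y`;
and `d̂(x,y) = 1` if `¬ E 0 x y`. -/
noncomputable def dhat {V : Type*} (E : ℕ → V → V → Prop) (x y : V) : ℝ :=
  if x = y then 0
  else if E 0 x y then ((sInf {n : ℕ | ¬ E n x y} : ℕ) : ℝ)⁻¹
  else 1

/-- `c` is a chain of length-parameter `ℓ` from `x` to `y`: consecutive terms are related. -/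
def IsChain' {V : Type*} (E : ℕ → V → V → Prop) (A : V → V → Prop)
    (x y : V) (ℓ : ℕ) (c : ℕ → V) : Prop :=
  c 0 = x ∧ c ℓ = y ∧ ∀ i < ℓ, Related E A (c i) (c (i + 1))

/-- The length of a chain: the sum of `d̂` over consecutive pairs. -/
noncomputable def chainLength {V : Type*} (E : ℕ → V → V → Prop)
    (ℓ : ℕ) (c : ℕ → V) : ℝ :=
  ∑ i ∈ Finset.range ℓ, dhat E (c i) (c (i + 1))

/-- The distance `d(x,y)`: the infimum of the lengths of all chains from `x` to `y`. -/
noncomputable def pdist {V : Type*} (E : ℕ → V → V → Prop) (A : V → V → Prop)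
    (x y : V) : ℝ :=
  sInf {L : ℝ | ∃ ℓ c, IsChain' E A x y ℓ c ∧ L = chainLength E ℓ c}

section Aux

variable {V : Type*} {E : ℕ → V → V → Prop} {A : V → V → Prop}

lemma dhat_nonneg (x y : V) : 0 ≤ dhat E x y := by
  unfold dhat; split_ifs <;> positivity

lemma dhat_self (x : V) : dhat E x x = 0 := by simp [dhat]

lemma dhat_symm (hEquiv : ∀ n, Equivalence (E n)) (x y : V) :
    dhat E x y = dhat E y x := by
  unfold dhat
  by_cases h : x = y
  · simp [h]
  · have h' : ¬ y = x := fun e => h e.symm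
    have hset : {n : ℕ | ¬ E n x y} = {n : ℕ | ¬ E n y x} := by
      ext n
      simp only [Set.mem_setOf_eq]
      exact not_congr ⟨fun hh => (hEquiv n).symm hh, fun hh => (hEquiv n).symm hh⟩
    by_cases h0 : E 0 x y
    · rw [if_neg h, if_neg h', if_pos h0, if_pos ((hEquiv 0).symm h0), hset]
    · rw [if_neg h, if_neg h', if_neg h0, if_neg (fun hh => h0 ((hEquiv 0).symm hh))]

lemma sInf_pos_of_E0 (hSep : ∀ x y : V, x ≠ y → ∃ n : ℕ, ¬ E n x y)
    {x y : V} (hxy : x ≠ y) (h0 : E 0 x y) : 0 < sInf {n : ℕ | ¬ E n x y} := by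
  rcases hSep x y hxy with ⟨n, hn⟩
  rcases Nat.eq_zero_or_pos (sInf {n : ℕ | ¬ E n x y}) with h | h
  · rcases Nat.sInf_eq_zero.mp h with h | h
    · exact absurd h0 h
    · exact absurd (Set.eq_empty_iff_forall_notMem.mp h n) (by simpa using hn)
  · exact h

lemma dhat_pos (hSep : ∀ x y : V, x ≠ y → ∃ n : ℕ, ¬ E n x y)
    {x y : V} (hxy : x ≠ y) : 0 < dhat E x y := by
  unfold dhat
  rw [if_neg hxy]
  split_ifs with h0
  · have := sInf_pos_of_E0 hSep hxy h0
    have : (0 : ℝ) < ((sInf {n : ℕ | ¬ E n x y} : ℕ) : ℝ) := by exact_mod_cast this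
    exact inv_pos.mpr this
  · exact one_pos

lemma dhat_le_one (hSep : ∀ x y : V, x ≠ y → ∃ n : ℕ, ¬ E n x y)
    (x y : V) : dhat E x y ≤ 1 := by
  unfold dhat
  split_ifs with h h0
  · exact zero_le_one
  · have h1 : 0 < sInf {n : ℕ | ¬ E n x y} := sInf_pos_of_E0 hSep h h0
    have : (1 : ℝ) ≤ ((sInf {n : ℕ | ¬ E n x y} : ℕ) : ℝ) := by exact_mod_cast h1
    exact inv_le_one_of_one_le₀ this
  · exact le_refl 1

lemma dhat_triangle (hEquiv : ∀ n, Equivalence (E n))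
    (hSep : ∀ x y : V, x ≠ y → ∃ n : ℕ, ¬ E n x y) (x y z : V) :
    dhat E x z ≤ dhat E x y + dhat E y z := by
  by_cases hxz : x = z
  · rw [hxz, dhat_self]
    exact add_nonneg (dhat_nonneg _ _) (dhat_nonneg _ _)
  by_cases hxy : x = y
  · rw [hxy, dhat_self, zero_add]
  by_cases hyz : y = z
  · rw [hyz, dhat_self, add_zero]
  by_cases h1 : E 0 x y
  · by_cases h2 : E 0 y z
    · -- all E 0 equivalent
      have h3 : E 0 x z := (hEquiv 0).trans h1 h2
      set Nxy := sInf {n : ℕ | ¬ E n x y} with hNxy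
      set Nyz := sInf {n : ℕ | ¬ E n y z} with hNyz
      set Nxz := sInf {n : ℕ | ¬ E n x z} with hNxz
      have hposxy : 0 < Nxy := sInf_pos_of_E0 hSep hxy h1
      have hposyz : 0 < Nyz := sInf_pos_of_E0 hSep hyz h2
      have hmin : min Nxy Nyz ≤ Nxz := by
        rcases hSep x z hxz with ⟨m, hm⟩
        have hmem : Nxz ∈ {n : ℕ | ¬ E n x z} := Nat.sInf_mem ⟨m, hm⟩
        by_contra hlt
        push_neg at hlt
        have hExy : E Nxz x y := by
          by_contra hc
          exact absurd (Nat.notMem_of_lt_sInf (lt_of_lt_of_le hlt (min_le_left _ _))) (by simp [hc])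
        have hEyz : E Nxz y z := by
          by_contra hc
          exact absurd (Nat.notMem_of_lt_sInf (lt_of_lt_of_le hlt (min_le_right _ _))) (by simp [hc])
        exact hmem ((hEquiv Nxz).trans hExy hEyz)
      have hform : dhat E x z = ((Nxz : ℕ) : ℝ)⁻¹ := by
        unfold dhat; rw [if_neg hxz, if_pos h3]
      have hfxy : dhat E x y = ((Nxy : ℕ) : ℝ)⁻¹ := by
        unfold dhat; rw [if_neg hxy, if_pos h1]
      have hfyz : dhat E y z = ((Nyz : ℕ) : ℝ)⁻¹ := by
        unfold dhat; rw [if_neg hyz, if_pos h2]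
      rw [hform, hfxy, hfyz]
      rcases min_le_iff.mp (le_refl (min Nxy Nyz)) with hcase | hcase
      all_goals {
        first
        | (have key : ((Nxz : ℕ) : ℝ)⁻¹ ≤ ((Nxy : ℕ) : ℝ)⁻¹ := by
            have h4 : (0:ℝ) < (Nxy : ℝ) := by exact_mod_cast hposxy
            have h5 : (Nxy : ℝ) ≤ (Nxz : ℝ) := by
              exact_mod_cast le_trans hcase hmin
            simpa using one_div_le_one_div_of_le h4 h5
           linarith [inv_nonneg.mpr (Nat.cast_nonneg Nyz : (0:ℝ) ≤ (Nyz:ℝ))])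
        | (have key : ((Nxz : ℕ) : ℝ)⁻¹ ≤ ((Nyz : ℕ) : ℝ)⁻¹ := by
            have h4 : (0:ℝ) < (Nyz : ℝ) := by exact_mod_cast hposyz
            have h5 : (Nyz : ℝ) ≤ (Nxz : ℝ) := by
              exact_mod_cast le_trans hcase hmin
            simpa using one_div_le_one_div_of_le h4 h5
           linarith [inv_nonneg.mpr (Nat.cast_nonneg Nxy : (0:ℝ) ≤ (Nxy:ℝ))])
      }
    · -- dhat y z = 1
      have h2' : dhat E y z = 1 := by unfold dhat; rw [if_neg hyz, if_neg h2]
      rw [h2']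
      have := dhat_le_one (E := E) hSep x z
      linarith [dhat_nonneg (E := E) x y]
  · have h1' : dhat E x y = 1 := by unfold dhat; rw [if_neg hxy, if_neg h1]
    rw [h1']
    have := dhat_le_one (E := E) hSep x z
    linarith [dhat_nonneg (E := E) y z]

lemma chainLength_nonneg (ℓ : ℕ) (c : ℕ → V) : 0 ≤ chainLength E ℓ c :=
  Finset.sum_nonneg fun i _ => dhat_nonneg _ _

lemma chainLength_ge_dhat (hEquiv : ∀ n, Equivalence (E n))
    (hSep : ∀ x y : V, x ≠ y → ∃ n : ℕ, ¬ E n x y) :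
    ∀ (ℓ : ℕ) (c : ℕ → V) (x y : V), IsChain' E A x y ℓ c →
      dhat E x y ≤ chainLength E ℓ c := by
  intro ℓ
  induction ℓ with
  | zero =>
    intro c x y ⟨h0, h1, _⟩
    have hxy : x = y := h0.symm.trans h1
    simp [hxy, dhat_self, chainLength]
  | succ n ih =>
    intro c x y ⟨h0, h1, hrel⟩
    have hsub : IsChain' E A x (c n) n c :=
      ⟨h0, rfl, fun i hi => hrel i (Nat.lt_succ_of_lt hi)⟩
    have := ih c x (c n) hsub
    have htri := dhat_triangle hEquiv hSep x (c n) y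
    have hstep : chainLength E (n + 1) c = chainLength E n c + dhat E (c n) (c (n + 1)) :=
      Finset.sum_range_succ _ _
    rw [hstep, h1]
    have : dhat E (c n) y = dhat E (c n) (c (n+1)) := by rw [h1]
    linarith [this ▸ htri]

end Aux

section Chains

variable {V : Type*} {E : ℕ → V → V → Prop} {A : V → V → Prop}

/-- The set of chain lengths from x to y. -/
def lenSet (E : ℕ → V → V → Prop) (A : V → V → Prop) (x y : V) : Set ℝ :=
  {L : ℝ | ∃ ℓ c, IsChain' E A x y ℓ c ∧ L = chainLength E ℓ c}

lemma lenSet_nonempty (hChain : ∀ x y : V, ∃ z : V, E 0 x z ∧ ∃ ℓ c, IsChain' E A z y ℓ c)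
    (x y : V) : (lenSet E A x y).Nonempty := by
  rcases hChain x y with ⟨z, hz, ℓ, c, h0, h1, hrel⟩
  refine ⟨chainLength E (ℓ + 1) (fun i => if i = 0 then x else c (i - 1)), ℓ + 1,
    (fun i => if i = 0 then x else c (i - 1)), ⟨?_, ?_, ?_⟩, rfl⟩
  · simp
  · simp [h1]
  · intro i hi
    match i with
    | 0 =>
      simp only [if_pos rfl, if_neg (Nat.one_ne_zero)]
      simpa [h0, Related] using Or.inr (Or.inl hz)
    | (j + 1) =>
      simp only [if_neg (Nat.succ_ne_zero j), if_neg (Nat.succ_ne_zero (j+1)), Nat.add_sub_cancel]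
      exact hrel j (by omega)

lemma lenSet_bddBelow (x y : V) : BddBelow (lenSet E A x y) := by
  refine ⟨0, fun L hL => ?_⟩
  rcases hL with ⟨ℓ, c, _, rfl⟩
  exact chainLength_nonneg ℓ c

lemma pdist_le (x y : V) {L : ℝ} (hL : L ∈ lenSet E A x y) : pdist E A x y ≤ L :=
  csInf_le (lenSet_bddBelow x y) hL

lemma dhat_le_pdist (hEquiv : ∀ n, Equivalence (E n))
    (hSep : ∀ x y : V, x ≠ y → ∃ n : ℕ, ¬ E n x y)
    (hChain : ∀ x y : V, ∃ z : V, E 0 x z ∧ ∃ ℓ c, IsChain' E A z y ℓ c)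
    (x y : V) : dhat E x y ≤ pdist E A x y := by
  refine le_csInf (lenSet_nonempty hChain x y) ?_
  rintro L ⟨ℓ, c, hc, rfl⟩
  exact chainLength_ge_dhat hEquiv hSep ℓ c x y hc

lemma pdist_le_dhat_of_related (x y : V) (h : Related E A x y) :
    pdist E A x y ≤ dhat E x y := by
  rcases eq_or_ne x y with rfl | hne
  · refine pdist_le x x ⟨0, fun _ => x, ⟨rfl, rfl, by omega⟩, ?_⟩
    simp [chainLength, dhat_self]
  · refine pdist_le x y ⟨1, fun i => if i = 0 then x else y, ⟨by simp, by simp, ?_⟩, ?_⟩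
    · intro i hi
      interval_cases i
      simpa using h
    · simp [chainLength]

lemma reverse_chain (hEquiv : ∀ n, Equivalence (E n))
    (hAsymm : ∀ x y : V, A x y → A y x)
    {x y : V} {ℓ : ℕ} {c : ℕ → V} (h : IsChain' E A x y ℓ c) :
    IsChain' E A y x ℓ (fun i => c (ℓ - i)) ∧
      chainLength E ℓ (fun i => c (ℓ - i)) = chainLength E ℓ c := by
  obtain ⟨h0, h1, hrel⟩ := h
  constructor
  · refine ⟨by simpa using h1, by simpa using h0, ?_⟩
    intro i hi
    have heq : ℓ - i = (ℓ - (i + 1)) + 1 := by omega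
    have := hrel (ℓ - (i + 1)) (by omega)
    show Related E A (c (ℓ - i)) (c (ℓ - (i + 1)))
    rw [heq]
    rcases this with h | h | h
    · exact Or.inl h.symm
    · exact Or.inr (Or.inl ((hEquiv 0).symm h))
    · exact Or.inr (Or.inr (hAsymm _ _ h))
  · unfold chainLength
    rw [← Finset.sum_range_reflect (fun j => dhat E (c j) (c (j + 1))) ℓ]
    refine Finset.sum_congr rfl ?_
    intro i hi
    have hi' : i < ℓ := Finset.mem_range.mp hi
    have h1' : ℓ - i = (ℓ - 1 - i) + 1 := by omega
    have h2' : ℓ - (i + 1) = ℓ - 1 - i := by omega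
    show dhat E (c (ℓ - i)) (c (ℓ - (i + 1))) = _
    rw [h1', h2', dhat_symm hEquiv]

lemma concat_chain {x y z : V} {ℓ₁ ℓ₂ : ℕ} {c₁ c₂ : ℕ → V}
    (h1 : IsChain' E A x y ℓ₁ c₁) (h2 : IsChain' E A y z ℓ₂ c₂) :
    IsChain' E A x z (ℓ₁ + ℓ₂) (fun i => if i < ℓ₁ then c₁ i else c₂ (i - ℓ₁)) ∧
      chainLength E (ℓ₁ + ℓ₂) (fun i => if i < ℓ₁ then c₁ i else c₂ (i - ℓ₁)) =
        chainLength E ℓ₁ c₁ + chainLength E ℓ₂ c₂ := by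
  obtain ⟨h10, h11, h1rel⟩ := h1
  obtain ⟨h20, h21, h2rel⟩ := h2
  set c : ℕ → V := fun i => if i < ℓ₁ then c₁ i else c₂ (i - ℓ₁) with hc
  have hcval : ∀ i, i ≤ ℓ₁ → c i = c₁ i := by
    intro i hi
    rcases lt_or_eq_of_le hi with h | rfl
    · simp [hc, h]
    · simp only [hc, lt_irrefl, if_neg (lt_irrefl i), Nat.sub_self]
      rw [h20, h11]
  have hcval2 : ∀ j, c (ℓ₁ + j) = c₂ j := by
    intro j
    rcases Nat.eq_zero_or_pos j with rfl | hj
    · simpa using (hcval ℓ₁ le_rfl).trans (h11.trans h20.symm)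
    · simp [hc, Nat.add_sub_cancel_left, (by omega : ¬ ℓ₁ + j < ℓ₁)]
  have hrel : ∀ i < ℓ₁ + ℓ₂, Related E A (c i) (c (i + 1)) := by
    intro i hi
    by_cases hlt : i < ℓ₁
    · rw [hcval i (le_of_lt hlt), hcval (i + 1) hlt]
      exact h1rel i hlt
    · have e1 : c i = c₂ (i - ℓ₁) := by simp [hc, hlt]
      have e2 : c (i + 1) = c₂ (i - ℓ₁ + 1) := by
        rw [(by omega : i + 1 = ℓ₁ + (i - ℓ₁ + 1)), hcval2]
      rw [e1, e2]
      exact h2rel (i - ℓ₁) (by omega)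
  refine ⟨⟨?_, ?_, hrel⟩, ?_⟩
  · rw [hcval 0 (Nat.zero_le _), h10]
  · rw [hcval2 ℓ₂, h21]
  · unfold chainLength
    rw [Finset.sum_range_add]
    congr 1
    · refine Finset.sum_congr rfl fun i hi => ?_
      have hi' : i < ℓ₁ := Finset.mem_range.mp hi
      rw [hcval i (le_of_lt hi'), hcval (i + 1) hi']
    · refine Finset.sum_congr rfl fun i _ => ?_
      rw [hcval2 i, (by omega : ℓ₁ + i + 1 = ℓ₁ + (i + 1)), hcval2 (i + 1)]

end Chains

lemma pdist_eq_sInf_lenSet {V : Type*} (E : ℕ → V → V → Prop) (A : V → V → Prop) (x y : V) :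
    pdist E A x y = sInf (lenSet E A x y) := rfl


/-- Abstract form of Theorem 5.5 (metric axioms and part (1)): `d` is a metric
on `V` — `d(x,y) = 0 ↔ x = y`, `d` is symmetric, and `d` satisfies the triangle
inequality — and `d(x,y) = d̂(x,y)` whenever `x` and `y` are related. -/
theorem pdist_is_metric (V : Type*) (E : ℕ → V → V → Prop) (A : V → V → Prop)
    (hEquiv : ∀ n, Equivalence (E n))
    (hRefine : ∀ n x y, E (n + 1) x y → E n x y)
    (hSep : ∀ x y : V, x ≠ y → ∃ n : ℕ, ¬ E n x y)
    (hAsymm : ∀ x y : V, A x y → A y x)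
    (hAirrefl : ∀ x : V, ¬ A x x)
    (hChain : ∀ x y : V, ∃ z : V, E 0 x z ∧ ∃ ℓ c, IsChain' E A z y ℓ c) :
    (∀ x y : V, pdist E A x y = 0 ↔ x = y) ∧
    (∀ x y : V, pdist E A x y = pdist E A y x) ∧
    (∀ x y z : V, pdist E A x z ≤ pdist E A x y + pdist E A y z) ∧
    (∀ x y : V, Related E A x y → pdist E A x y = dhat E x y) := by
  have hRel : ∀ x y : V, Related E A x y → pdist E A x y = dhat E x y := fun x y h =>
    le_antisymm (pdist_le_dhat_of_related x y h) (dhat_le_pdist hEquiv hSep hChain x y)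
  refine ⟨?_, ?_, ?_, hRel⟩
  · intro x y
    constructor
    · intro h
      by_contra hne
      have h1 := dhat_pos hSep hne
      have h2 := dhat_le_pdist hEquiv hSep hChain x y
      linarith
    · rintro rfl
      rw [hRel x x (Or.inl rfl), dhat_self]
  · intro x y
    have hsub : ∀ a b : V, lenSet E A a b ⊆ lenSet E A b a := by
      rintro a b L ⟨ℓ, c, hc, rfl⟩
      obtain ⟨hc', hlen⟩ := reverse_chain hEquiv hAsymm hc
      exact ⟨ℓ, _, hc', hlen.symm⟩
    rw [pdist_eq_sInf_lenSet, pdist_eq_sInf_lenSet]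
    exact le_antisymm
      (csInf_le_csInf (lenSet_bddBelow x y) (lenSet_nonempty hChain y x) (hsub y x))
      (csInf_le_csInf (lenSet_bddBelow y x) (lenSet_nonempty hChain x y) (hsub x y))
  · intro x y z
    have key : ∀ a ∈ lenSet E A x y, ∀ b ∈ lenSet E A y z, pdist E A x z ≤ a + b := by
      rintro a ⟨ℓ₁, c₁, h1, rfl⟩ b ⟨ℓ₂, c₂, h2, rfl⟩
      obtain ⟨hc, hlen⟩ := concat_chain h1 h2
      exact hlen ▸ pdist_le x z ⟨_, _, hc, rfl⟩
    have step : ∀ b ∈ lenSet E A y z, pdist E A x z - b ≤ pdist E A x y := fun b hb => by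
      rw [pdist_eq_sInf_lenSet E A x y]
      exact le_csInf (lenSet_nonempty hChain x y) (fun a ha => by linarith [key a ha b hb])
    have step2 : pdist E A x z - pdist E A x y ≤ pdist E A y z := by
      rw [pdist_eq_sInf_lenSet E A y z]
      exact le_csInf (lenSet_nonempty hChain y z) (fun b hb => by linarith [step b hb])
    linarith
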